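/- An R-module M is semisimple if and only if M is co-retractable and Baer. -/

import Mathlib

universe u v

/-- `M` is co-retractable: there is a nonzero homomorphism `M/N → M`
for every proper submodule `N < M`. -/
def Coretractable (R : Type u) [Ring R] (M : Type v) [AddCommGroup M]
    [Module R M] : Prop :=
  ∀ N : Submodule R M, N ≠ ⊤ → ∃ f : (M ⧸ N) →ₗ[R] M, f ≠ 0

/-- `M` is a Baer module: the common kernel of any set of endomorphisms
is a direct summand of `M`. -/
def IsBaerModule (R : Type u) [Ring R] (M : Type v) [AddCommGroup M]
    [Module R M] : Prop :=
  ∀ X : Set (Module.End R M), ∃ p : Submodule R M,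
    IsCompl (⨅ f ∈ X, LinearMap.ker f) p

theorem stmt17 (R : Type u) [Ring R] (M : Type v) [AddCommGroup M] [Module R M] :
    IsSemisimpleModule R M ↔ Coretractable R M ∧ IsBaerModule R M := by
  constructor
  · intro hss
    constructor
    · intro N hN
      obtain ⟨p, hp⟩ := exists_isCompl N
      refine ⟨p.subtype ∘ₗ (Submodule.quotientEquivOfIsCompl N p hp : (M ⧸ N) →ₗ[R] p), ?_⟩
      intro hzero
      apply hN
      rw [← Submodule.Quotient.subsingleton_iff]
      constructor
      intro a b
      have hinj : Function.Injective (p.subtype ∘ₗ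
          (Submodule.quotientEquivOfIsCompl N p hp : (M ⧸ N) →ₗ[R] p)) :=
        p.injective_subtype.comp (Submodule.quotientEquivOfIsCompl N p hp).injective
      apply hinj
      rw [hzero]
      rfl
    · intro X
      exact exists_isCompl _
  · rintro ⟨hco, hbaer⟩
    rw [isSemisimpleModule_iff]
    constructor
    intro N
    set X : Set (Module.End R M) := {f | N ≤ LinearMap.ker f} with hX
    obtain ⟨p, hp⟩ := hbaer X
    set K : Submodule R M := ⨅ f ∈ X, LinearMap.ker f with hK
    have hNK : N ≤ K := le_iInf fun f => le_iInf fun hf => hf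
    have htop : N ⊔ p = ⊤ := by
      by_contra h
      obtain ⟨g, hg⟩ := hco (N ⊔ p) h
      set f : Module.End R M := g ∘ₗ (N ⊔ p).mkQ with hf
      have hker : N ⊔ p ≤ LinearMap.ker f := fun x hx => by
        simp [hf, LinearMap.mem_ker, Submodule.Quotient.mk_eq_zero, hx,
          (Submodule.Quotient.mk_eq_zero _).mpr hx]
      have hfX : f ∈ X := le_trans le_sup_left hker
      have hKker : K ≤ LinearMap.ker f := iInf_le_of_le f (iInf_le_of_le hfX le_rfl)
      have : (⊤ : Submodule R M) ≤ LinearMap.ker f := by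
        rw [← hp.sup_eq_top]
        exact sup_le hKker (le_trans le_sup_right hker)
      have hf0 : f = 0 := LinearMap.ker_eq_top.mp (top_le_iff.mp this)
      apply hg
      ext x
      simpa [hf] using LinearMap.congr_fun hf0 x
    have hKN : K = N := by
      have h3 := sup_inf_assoc_of_le (α := Submodule R M) p hNK
      rw [htop, top_inf_eq, inf_comm, hp.inf_eq_bot, sup_bot_eq] at h3
      exact h3
    exact ⟨p, hKN ▸ hp⟩
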